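/- Let m ≥ 2 and m12 ≥ 1 be integers, and let k1, k2 be integers with 0 ≤ k2 ≤ k1 and m12 ≤ k1 ≤ m·m12 − 1. Set n1 = m·m12 − k1 and n2 = m·m12 − k2. Then TNS(m,m12,m; 2,n1,n2) equals the whole space of tensors Fin 2 → Fin n1 → Fin n2 → ℂ. (This is the final clause of the main theorem: when the nontriviality condition k1 < m12 fails, the tensor network variety fills the ambient space.) -/

import Mathlib

open scoped BigOperators

noncomputable section

/-- Parametrized triangle tensor network tensors. -/
def tnsSet (m01 m12 m02 n0 n1 n2 : ℕ) :
    Set (Fin n0 → Fin n1 → Fin n2 → ℂ) :=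
  {T | ∃ (X0 : Fin n0 → Fin m01 × Fin m02 → ℂ)
        (X1 : Fin n1 → Fin m01 × Fin m12 → ℂ)
        (X2 : Fin n2 → Fin m12 × Fin m02 → ℂ),
      ∀ a b c, T a b c =
        ∑ i : Fin m01, ∑ j : Fin m12, ∑ k : Fin m02,
          X0 a (i, k) * X1 b (i, j) * X2 c (j, k)}

/-- The triangle tensor network variety: Euclidean closure of the parametrized set. -/
def TNS (m01 m12 m02 n0 n1 n2 : ℕ) : Set (Fin n0 → Fin n1 → Fin n2 → ℂ) :=
  closure (tnsSet m01 m12 m02 n0 n1 n2)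

/-- The vanishing ideal of a subset of an affine space over ℂ. -/
def vanishingIdeal' {ι : Type*} (Z : Set (ι → ℂ)) : Ideal (MvPolynomial ι ℂ) where
  carrier := {p | ∀ z ∈ Z, MvPolynomial.eval z p = 0}
  zero_mem' := by intro z _; simp
  add_mem' := by
    intro a b ha hb z hz
    simp [map_add, ha z hz, hb z hz]
  smul_mem' := by
    intro c a ha z hz
    simp [smul_eq_mul, ha z hz]

/-- Affine dimension of a set of coordinate tensors. -/
def affineDim {n0 n1 n2 : ℕ} (Z : Set (Fin n0 → Fin n1 → Fin n2 → ℂ)) : WithBot ℕ∞ :=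
  ringKrullDim (MvPolynomial (Fin n0 × Fin n1 × Fin n2) ℂ ⧸
    vanishingIdeal' ((fun T (p : Fin n0 × Fin n1 × Fin n2) => T p.1 p.2.1 p.2.2) '' Z))

open Matrix Polynomial Kronecker
namespace TnsProof

variable {m' m12 : ℕ}

/-- distinct scalar points -/
def cpt (i : Fin (m' + 2)) : ℂ := (i : ℕ)

lemma cpt_injective : Function.Injective (cpt (m' := m')) := by
  intro i j h
  have : (i : ℕ) = (j : ℕ) := Nat.cast_injective h
  exact Fin.ext this

/-- base tensor slices (m×m part) -/
def tb (a : Fin 2) : Matrix (Fin (m' + 2)) (Fin (m' + 2)) ℂ :=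
  Matrix.of fun s r => if s ≠ 0 ∧ r.val + 1 = s.val + a.val then 1 else 0

/-- base certificate matrix (m×m part) -/
def lamB (ci : ℂ) : Matrix (Fin (m' + 2)) (Fin (m' + 2)) ℂ :=
  Matrix.of fun s r =>
    if s = 0 then (if r = 0 then 1 else 0) else ci * tb 0 s r - tb 1 s r

/-- explicit inverse of `lamB` -/
def invB (ci : ℂ) : Matrix (Fin (m' + 2)) (Fin (m' + 2)) ℂ :=
  Matrix.of fun r y =>
    if y = 0 then ci ^ r.val
    else if y.val ≤ r.val then -(ci ^ (r.val - y.val)) else 0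

lemma sum_delta_val {n : ℕ} (v : ℕ) (g : Fin n → ℂ) :
    (∑ s : Fin n, if s.val = v then g s else 0) = if h : v < n then g ⟨v, h⟩ else 0 := by
  by_cases h : v < n
  · rw [dif_pos h, Finset.sum_eq_single ⟨v, h⟩]
    · simp
    · intro b _ hb
      rw [if_neg]
      intro hbv; exact hb (Fin.ext hbv)
    · simp
  · rw [dif_neg h, Finset.sum_eq_zero]
    intro s _
    rw [if_neg]
    intro hs; exact h (hs ▸ s.isLt)

lemma invB_mul_lamB (ci : ℂ) : invB (m' := m') ci * lamB ci = 1 := by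
  ext r r'
  rw [Matrix.mul_apply, Fin.sum_univ_succ]
  have h0 : invB ci r 0 * lamB ci 0 r' = ci ^ r.val * (if r' = 0 then 1 else 0) := by
    simp [invB, lamB]
  rw [h0]
  have hsucc : ∀ s : Fin (m' + 1),
      invB ci r s.succ * lamB ci s.succ r' =
      (if s.val + 1 ≤ r.val then -(ci ^ (r.val - (s.val + 1))) else 0) *
        (ci * (if r'.val + 1 = s.val + 1 then 1 else 0) -
          (if r'.val + 1 = s.val + 1 + 1 then 1 else 0)) := by
    intro s
    simp only [invB, lamB, tb, Matrix.of_apply, Fin.val_succ, ne_eq, Fin.succ_ne_zero,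
      not_false_eq_true, true_and, if_neg (Fin.succ_ne_zero s), Fin.val_zero, Fin.val_one,
      add_zero, if_false]
  rw [Finset.sum_congr rfl (fun s _ => hsucc s), Matrix.one_apply]
  have hr2 := r.isLt
  induction r' using Fin.cases with
  | zero =>
    have hpt : ∀ s : Fin (m' + 1),
        (if s.val + 1 ≤ r.val then -(ci ^ (r.val - (s.val + 1))) else 0) *
          (ci * (if (0 : Fin (m' + 2)).val + 1 = s.val + 1 then 1 else 0) -
            (if (0 : Fin (m' + 2)).val + 1 = s.val + 1 + 1 then 1 else 0)) =
        (if s.val = 0 then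
          (if s.val + 1 ≤ r.val then -(ci ^ (r.val - (s.val + 1))) else 0) * ci else 0) := by
      intro s
      simp only [Fin.val_zero]
      by_cases hs : s.val = 0
      · simp only [hs, if_true]
        split_ifs <;> (try ring) <;> exfalso <;> omega
      · have h1 : ¬ (0 + 1 = s.val + 1) := by omega
        have h2 : ¬ (0 + 1 = s.val + 1 + 1) := by omega
        simp only [hs, h1, h2, if_false]
        ring
    rw [Finset.sum_congr rfl (fun s _ => hpt s), sum_delta_val, dif_pos (Nat.succ_pos m')]
    have hv : ((⟨0, Nat.succ_pos m'⟩ : Fin (m' + 1)) : ℕ) = 0 := rfl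
    rw [hv]
    by_cases hr : r.val = 0
    · rw [if_pos rfl, if_neg (show ¬ (0 + 1 ≤ r.val) by omega), if_pos (Fin.ext hr), hr]
      norm_num
    · rw [if_pos rfl, if_pos (show 0 + 1 ≤ r.val by omega),
        if_neg (show ¬ (r = 0) from fun h => hr (by rw [h]; rfl))]
      have hp : ci ^ r.val = ci ^ (r.val - (0 + 1)) * ci := by
        rw [← pow_succ]; congr 1; omega
      rw [hp]; ring
  | succ t =>
    have ht2 := t.isLt
    have hpt : ∀ s : Fin (m' + 1),
        (if s.val + 1 ≤ r.val then -(ci ^ (r.val - (s.val + 1))) else 0) *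
          (ci * (if (t.succ : Fin (m' + 2)).val + 1 = s.val + 1 then 1 else 0) -
            (if (t.succ : Fin (m' + 2)).val + 1 = s.val + 1 + 1 then 1 else 0)) =
        (if s.val = t.val + 1 then
            (if s.val + 1 ≤ r.val then -(ci ^ (r.val - (s.val + 1))) else 0) * ci else 0) -
        (if s.val = t.val then
            (if s.val + 1 ≤ r.val then -(ci ^ (r.val - (s.val + 1))) else 0) else 0) := by
      intro s
      simp only [Fin.val_succ]
      split_ifs <;> (try ring) <;> exfalso <;> omega
    rw [Finset.sum_congr rfl (fun s _ => hpt s), Finset.sum_sub_distrib,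
      sum_delta_val, sum_delta_val, dif_pos t.isLt, if_neg (Fin.succ_ne_zero t)]
    have hvt : ((⟨t.val, t.isLt⟩ : Fin (m' + 1)) : ℕ) = t.val := rfl
    rw [hvt]
    by_cases ht : t.val + 1 < m' + 1
    · rw [dif_pos ht]
      have hv2 : ((⟨t.val + 1, ht⟩ : Fin (m' + 1)) : ℕ) = t.val + 1 := rfl
      rw [hv2]
      by_cases h1 : t.val + 1 + 1 ≤ r.val
      · rw [if_pos h1, if_pos (by omega), if_neg (by rw [Fin.ext_iff, Fin.val_succ]; omega)]
        have hp : ci ^ (r.val - (t.val + 1)) = ci ^ (r.val - (t.val + 1 + 1)) * ci := by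
          rw [← pow_succ]; congr 1; omega
        rw [hp]; ring
      · by_cases h2 : t.val + 1 ≤ r.val
        · rw [if_neg h1, if_pos h2, if_pos (by rw [Fin.ext_iff, Fin.val_succ]; omega)]
          have hz : r.val - (t.val + 1) = 0 := by omega
          rw [hz, pow_zero]; ring
        · rw [if_neg h1, if_neg h2, if_neg (by rw [Fin.ext_iff, Fin.val_succ]; omega)]
          ring
    · rw [dif_neg ht]
      by_cases h2 : t.val + 1 ≤ r.val
      · rw [if_pos h2, if_pos (by rw [Fin.ext_iff, Fin.val_succ]; omega)]
        have hz : r.val - (t.val + 1) = 0 := by omega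
        rw [hz, pow_zero]; ring
      · rw [if_neg h2, if_neg (by rw [Fin.ext_iff, Fin.val_succ]; omega)]
        ring

variable {n1 n2 : ℕ}

/-- row embedding, avoiding rows with first coordinate 0 -/
def emb1 (hn1 : n1 ≤ (m' + 1) * m12) (b : Fin n1) : Fin (m' + 2) × Fin m12 :=
  ((finProdFinEquiv.symm (Fin.castLE hn1 b)).1.succ,
    (finProdFinEquiv.symm (Fin.castLE hn1 b)).2)

def emb2 (hn2 : n2 ≤ (m' + 2) * m12) (c : Fin n2) : Fin (m' + 2) × Fin m12 :=
  finProdFinEquiv.symm (Fin.castLE hn2 c)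

lemma emb1_fst_ne_zero (hn1 : n1 ≤ (m' + 1) * m12) (b : Fin n1) :
    (emb1 (m12 := m12) hn1 b).1 ≠ 0 :=
  Fin.succ_ne_zero ((finProdFinEquiv.symm (Fin.castLE hn1 b)).1)

lemma emb1_injective (hn1 : n1 ≤ (m' + 1) * m12) :
    Function.Injective (emb1 (m12 := m12) hn1) := by
  intro b b' h
  have h1 : (finProdFinEquiv.symm (Fin.castLE hn1 b)) =
      (finProdFinEquiv.symm (Fin.castLE hn1 b')) := by
    have ha := congrArg Prod.fst h
    have hb := congrArg Prod.snd h
    simp only [emb1] at ha hb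
    exact Prod.ext (Fin.succ_injective _ ha) hb
  have h2 := finProdFinEquiv.symm.injective h1
  have h3 := congrArg Fin.val h2
  exact Fin.ext h3

lemma emb2_injective (hn2 : n2 ≤ (m' + 2) * m12) :
    Function.Injective (emb2 (m' := m') (m12 := m12) hn2) := by
  intro c c' h
  have h2 := finProdFinEquiv.symm.injective h
  exact Fin.ext (by simpa using congrArg Fin.val h2)

variable (T : Fin 2 → Fin n1 → Fin n2 → ℂ)

/-- zero-padding of the tensor slices to the big square size -/
def padT (hn1 : n1 ≤ (m' + 1) * m12) (hn2 : n2 ≤ (m' + 2) * m12) (a : Fin 2) :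
    Matrix (Fin (m' + 2) × Fin m12) (Fin (m' + 2) × Fin m12) ℂ :=
  Matrix.of fun x y => ∑ b : Fin n1, ∑ c : Fin n2,
    if x = emb1 hn1 b ∧ y = emb2 hn2 c then T a b c else 0

lemma padT_emb (hn1 : n1 ≤ (m' + 1) * m12) (hn2 : n2 ≤ (m' + 2) * m12)
    (a : Fin 2) (b : Fin n1) (c : Fin n2) :
    padT T hn1 hn2 a (emb1 hn1 b) (emb2 hn2 c) = T a b c := by
  unfold padT
  rw [Matrix.of_apply, Finset.sum_eq_single b]
  · rw [Finset.sum_eq_single c]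
    · rw [if_pos ⟨rfl, rfl⟩]
    · intro c' _ hc'
      rw [if_neg]
      rintro ⟨-, h2⟩
      exact hc' (emb2_injective hn2 h2.symm)
    · intro hc; exact absurd (Finset.mem_univ c) hc
  · intro b' _ hb'
    rw [Finset.sum_eq_zero]
    intro c' _
    rw [if_neg]
    rintro ⟨h1, -⟩
    exact hb' (emb1_injective hn1 h1.symm)
  · intro hb; exact absurd (Finset.mem_univ b) hb

/-- big base slices -/
def Tbig (a : Fin 2) : Matrix (Fin (m' + 2) × Fin m12) (Fin (m' + 2) × Fin m12) ℂ :=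
  tb a ⊗ₖ (1 : Matrix (Fin m12) (Fin m12) ℂ)

/-- polynomial pencil entries along the line from the base point to `padT` -/
def TP (hn1 : n1 ≤ (m' + 1) * m12) (hn2 : n2 ≤ (m' + 2) * m12) (a : Fin 2) :
    Matrix (Fin (m' + 2) × Fin m12) (Fin (m' + 2) × Fin m12) ℂ[X] :=
  Matrix.of fun x y => C (Tbig a x y) + X * C (padT T hn1 hn2 a x y - Tbig a x y)

/-- the certificate matrices over `ℂ[X]` -/
def Lam (hn1 : n1 ≤ (m' + 1) * m12) (hn2 : n2 ≤ (m' + 2) * m12) (i : Fin (m' + 2)) :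
    Matrix (Fin (m' + 2) × Fin m12) (Fin (m' + 2) × Fin m12) ℂ[X] :=
  Matrix.of fun x y =>
    if x.1 = 0 then (if y.1 = 0 ∧ y.2 = x.2 then 1 else 0)
    else C (cpt i) * TP T hn1 hn2 0 x y - TP T hn1 hn2 1 x y

/-- candidate kernel-basis matrix over `ℂ[X]` -/
def Ehat (hn1 : n1 ≤ (m' + 1) * m12) (hn2 : n2 ≤ (m' + 2) * m12) :
    Matrix (Fin (m' + 2) × Fin m12) (Fin (m' + 2) × Fin m12) ℂ[X] :=
  Matrix.of fun y z => (Lam T hn1 hn2 z.1).adjugate y (0, z.2)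

lemma TP_map_apply (hn1 : n1 ≤ (m' + 1) * m12) (hn2 : n2 ≤ (m' + 2) * m12)
    (t : ℂ) (a : Fin 2) (x y : Fin (m' + 2) × Fin m12) :
    eval t (TP T hn1 hn2 a x y) =
      Tbig a x y + t * (padT T hn1 hn2 a x y - Tbig a x y) := by
  simp [TP]

lemma Lam_map_zero (hn1 : n1 ≤ (m' + 1) * m12) (hn2 : n2 ≤ (m' + 2) * m12)
    (i : Fin (m' + 2)) :
    (Lam T hn1 hn2 i).map (eval 0) =
      lamB (cpt i) ⊗ₖ (1 : Matrix (Fin m12) (Fin m12) ℂ) := by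
  ext x y
  rw [Matrix.map_apply, Lam, Matrix.of_apply, kroneckerMap_apply, lamB, Matrix.of_apply]
  by_cases hx : x.1 = 0
  · rw [if_pos hx, if_pos hx, apply_ite (eval 0), eval_one, eval_zero]
    by_cases hy : y.1 = 0
    · by_cases hq : y.2 = x.2
      · rw [if_pos ⟨hy, hq⟩, if_pos hy, hq, Matrix.one_apply_eq]
        ring
      · rw [if_neg (by rintro ⟨-, h⟩; exact hq h), if_pos hy, Matrix.one_apply_ne (fun h => hq (by rw [h]))]
        ring
    · rw [if_neg (by rintro ⟨h, -⟩; exact hy h), if_neg hy]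
      ring
  · rw [if_neg hx, if_neg hx, eval_sub, eval_mul, eval_C, TP_map_apply, TP_map_apply]
    simp only [zero_mul, add_zero, mul_zero]
    rw [Tbig, Tbig, kroneckerMap_apply, kroneckerMap_apply]
    ring

lemma inv_Lam_zero (hn1 : n1 ≤ (m' + 1) * m12) (hn2 : n2 ≤ (m' + 2) * m12)
    (i : Fin (m' + 2)) :
    (invB (cpt i) ⊗ₖ (1 : Matrix (Fin m12) (Fin m12) ℂ)) *
      ((Lam T hn1 hn2 i).map (eval 0)) = 1 := by
  rw [Lam_map_zero, ← mul_kronecker_mul, invB_mul_lamB, Matrix.one_mul, one_kronecker_one]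

lemma det_Lam_zero_ne (hn1 : n1 ≤ (m' + 1) * m12) (hn2 : n2 ≤ (m' + 2) * m12)
    (i : Fin (m' + 2)) : ((Lam T hn1 hn2 i).map (eval 0)).det ≠ 0 :=
  (Matrix.isUnit_det_of_left_inverse (inv_Lam_zero T hn1 hn2 i)).ne_zero

lemma adj_Lam_zero (hn1 : n1 ≤ (m' + 1) * m12) (hn2 : n2 ≤ (m' + 2) * m12)
    (i : Fin (m' + 2)) :
    ((Lam T hn1 hn2 i).map (eval 0)).adjugate =
      ((Lam T hn1 hn2 i).map (eval 0)).det •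
        (invB (cpt i) ⊗ₖ (1 : Matrix (Fin m12) (Fin m12) ℂ)) := by
  set A := (Lam T hn1 hn2 i).map (eval 0)
  set B := invB (cpt i) ⊗ₖ (1 : Matrix (Fin m12) (Fin m12) ℂ)
  have h1 : B * A = 1 := inv_Lam_zero T hn1 hn2 i
  have h2 : A * B = 1 := mul_eq_one_comm.mp h1
  calc A.adjugate = A.adjugate * (A * B) := by rw [h2, Matrix.mul_one]
    _ = (A.adjugate * A) * B := by rw [Matrix.mul_assoc]
    _ = A.det • B := by rw [Matrix.adjugate_mul, Matrix.smul_mul, Matrix.one_mul]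

lemma adj_map (hn1 : n1 ≤ (m' + 1) * m12) (hn2 : n2 ≤ (m' + 2) * m12)
    (t : ℂ) (i : Fin (m' + 2)) :
    ((Lam T hn1 hn2 i).map (eval t)).adjugate =
      (Lam T hn1 hn2 i).adjugate.map (eval t) := by
  rw [← Polynomial.coe_evalRingHom, ← RingHom.mapMatrix_apply, ← RingHom.mapMatrix_apply,
    RingHom.map_adjugate]

lemma Ehat_map_apply (hn1 : n1 ≤ (m' + 1) * m12) (hn2 : n2 ≤ (m' + 2) * m12)
    (t : ℂ) (y z : Fin (m' + 2) × Fin m12) :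
    (Ehat T hn1 hn2).map (eval t) y z =
      ((Lam T hn1 hn2 z.1).map (eval t)).adjugate y (0, z.2) := by
  rw [Matrix.map_apply, Ehat, Matrix.of_apply, adj_map, Matrix.map_apply]

lemma Ehat_map_zero (hn1 : n1 ≤ (m' + 1) * m12) (hn2 : n2 ≤ (m' + 2) * m12) :
    (Ehat T hn1 hn2).map (eval 0) =
      (Matrix.of fun r i : Fin (m' + 2) =>
          ((Lam T hn1 hn2 i).map (eval 0)).det * cpt i ^ (r : ℕ)) ⊗ₖ
        (1 : Matrix (Fin m12) (Fin m12) ℂ) := by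
  ext y z
  rw [Ehat_map_apply, adj_Lam_zero, Matrix.smul_apply, smul_eq_mul, kroneckerMap_apply,
    kroneckerMap_apply, Matrix.of_apply]
  have hinv : invB (cpt z.1) y.1 (0 : Fin (m' + 2)) = cpt z.1 ^ (y.1 : ℕ) := by
    rw [invB, Matrix.of_apply, if_pos rfl]
  rw [hinv]
  ring

lemma det_Ehat_zero_ne (hn1 : n1 ≤ (m' + 1) * m12) (hn2 : n2 ≤ (m' + 2) * m12) :
    ((Ehat T hn1 hn2).map (eval 0)).det ≠ 0 := by
  rw [Ehat_map_zero, det_kronecker, Matrix.det_one, one_pow, mul_one]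
  apply pow_ne_zero
  have hAV : (Matrix.of fun r i : Fin (m' + 2) =>
      ((Lam T hn1 hn2 i).map (eval 0)).det * cpt i ^ (r : ℕ)) =
      (Matrix.vandermonde (cpt (m' := m')))ᵀ *
        Matrix.diagonal (fun i => ((Lam T hn1 hn2 i).map (eval 0)).det) := by
    ext r i
    rw [Matrix.mul_diagonal, Matrix.transpose_apply, Matrix.vandermonde, Matrix.of_apply,
      Matrix.of_apply]
    ring
  rw [hAV, Matrix.det_mul, Matrix.det_transpose, Matrix.det_vandermonde, Matrix.det_diagonal]
  apply mul_ne_zero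
  · rw [Finset.prod_ne_zero_iff]
    intro i _
    rw [Finset.prod_ne_zero_iff]
    intro j hj
    have hij : i < j := Finset.mem_Ioi.mp hj
    exact sub_ne_zero_of_ne (fun h => absurd (cpt_injective h) (ne_of_gt hij))
  · rw [Finset.prod_ne_zero_iff]
    intro i _
    exact det_Lam_zero_ne T hn1 hn2 i

lemma eval_zero_det_Ehat (hn1 : n1 ≤ (m' + 1) * m12) (hn2 : n2 ≤ (m' + 2) * m12) :
    eval 0 (Ehat T hn1 hn2).det ≠ 0 := by
  have h : eval 0 (Ehat T hn1 hn2).det = ((Ehat T hn1 hn2).map (eval 0)).det := by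
    rw [← Polynomial.coe_evalRingHom, RingHom.map_det, RingHom.mapMatrix_apply]
  rw [h]
  exact det_Ehat_zero_ne T hn1 hn2

/-- Key membership lemma: whenever the certificate determinant does not vanish at `t`,
the corresponding tensor on the line is an exact tensor network state. -/
lemma mem_tnsSet_of_cert (hn1 : n1 ≤ (m' + 1) * m12) (hn2 : n2 ≤ (m' + 2) * m12)
    (t : ℂ) (ht : eval t (Ehat T hn1 hn2).det ≠ 0) :
    (fun a b c => eval t (TP T hn1 hn2 a (emb1 hn1 b) (emb2 hn2 c))) ∈
      tnsSet (m' + 2) m12 (m' + 2) 2 n1 n2 := by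
  classical
  set Et := (Ehat T hn1 hn2).map (eval t) with hEt
  set Tt := fun a : Fin 2 => (TP T hn1 hn2 a).map (eval t) with hTt
  have hdet : IsUnit Et.det := by
    apply isUnit_iff_ne_zero.mpr
    have h : Et.det = eval t (Ehat T hn1 hn2).det := by
      rw [hEt, ← Polynomial.coe_evalRingHom, ← RingHom.mapMatrix_apply, ← RingHom.map_det]
    rw [h]; exact ht
  have hE1 : Et * Et⁻¹ = 1 := Matrix.mul_nonsing_inv Et hdet
  -- kernel relation for each certified kernel column
  have kerrel : ∀ (i : Fin (m' + 2)) (j : Fin m12) (x : Fin (m' + 2) × Fin m12), x.1 ≠ 0 →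
      ∑ y : Fin (m' + 2) × Fin m12,
        (cpt i * Tt 0 x y - Tt 1 x y) * Et y (i, j) = 0 := by
    intro i j x hx
    have h1 : ((Lam T hn1 hn2 i).map (eval t)) *
        ((Lam T hn1 hn2 i).map (eval t)).adjugate =
        ((Lam T hn1 hn2 i).map (eval t)).det • (1 : Matrix _ _ ℂ) :=
      Matrix.mul_adjugate _
    have h2 : (((Lam T hn1 hn2 i).map (eval t)) *
        ((Lam T hn1 hn2 i).map (eval t)).adjugate) x (0, j) = 0 := by
      rw [h1, Matrix.smul_apply, Matrix.one_apply_ne (fun h => hx (by rw [h])), smul_zero]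
    rw [Matrix.mul_apply] at h2
    calc ∑ y : Fin (m' + 2) × Fin m12, (cpt i * Tt 0 x y - Tt 1 x y) * Et y (i, j)
        = ∑ y : Fin (m' + 2) × Fin m12, ((Lam T hn1 hn2 i).map (eval t)) x y *
            ((Lam T hn1 hn2 i).map (eval t)).adjugate y (0, j) := by
          apply Finset.sum_congr rfl
          intro y _
          congr 1
          · rw [Matrix.map_apply, Lam, Matrix.of_apply, if_neg hx]
            simp only [eval_sub, eval_mul, eval_C]
            rw [hTt]; simp only [Matrix.map_apply]
          · rw [← Ehat_map_apply T hn1 hn2 t y (i, j), hEt]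
      _ = 0 := h2
  refine ⟨(fun a ik => if ik.1 = ik.2 then (if a = 0 then 1 else cpt ik.1) else 0),
    (fun b ij => (Tt 0 * Et) (emb1 hn1 b) ij),
    (fun c jk => Et⁻¹ (jk.2, jk.1) (emb2 hn2 c)), ?_⟩
  intro a b c
  dsimp only
  have hk : ∀ (i : Fin (m' + 2)) (j : Fin m12),
      (∑ k : Fin (m' + 2), (if i = k then (if a = 0 then 1 else cpt i) else 0) *
        (Tt 0 * Et) (emb1 hn1 b) (i, j) * Et⁻¹ (k, j) (emb2 hn2 c)) =
      (if a = 0 then 1 else cpt i) *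
        ((Tt 0 * Et) (emb1 hn1 b) (i, j) * Et⁻¹ (i, j) (emb2 hn2 c)) := by
    intro i j
    rw [Finset.sum_congr rfl (fun k _ => by
      rw [ite_mul, ite_mul, zero_mul, zero_mul, mul_assoc]),
      Finset.sum_ite_eq, if_pos (Finset.mem_univ i)]
  rw [Finset.sum_congr rfl (fun i _ => Finset.sum_congr rfl (fun j _ => hk i j))]
  have hfin : ∀ M : Matrix (Fin (m' + 2) × Fin m12) (Fin (m' + 2) × Fin m12) ℂ,
      (∑ i : Fin (m' + 2), ∑ j : Fin m12,
        (M * Et) (emb1 hn1 b) (i, j) * Et⁻¹ (i, j) (emb2 hn2 c)) =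
      M (emb1 hn1 b) (emb2 hn2 c) := by
    intro M
    rw [← Fintype.sum_prod_type (f := fun y : Fin (m' + 2) × Fin m12 =>
      (M * Et) (emb1 hn1 b) y * Et⁻¹ y (emb2 hn2 c))]
    calc (∑ y : Fin (m' + 2) × Fin m12, (M * Et) (emb1 hn1 b) y * Et⁻¹ y (emb2 hn2 c))
        = ((M * Et) * Et⁻¹) (emb1 hn1 b) (emb2 hn2 c) := (Matrix.mul_apply).symm
      _ = M (emb1 hn1 b) (emb2 hn2 c) := by
          rw [Matrix.mul_assoc, hE1, Matrix.mul_one]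
  by_cases ha : a = 0
  · subst ha
    have hw : ∀ (i : Fin (m' + 2)) (j : Fin m12),
        (if (0 : Fin 2) = 0 then (1:ℂ) else cpt i) *
          ((Tt 0 * Et) (emb1 hn1 b) (i, j) * Et⁻¹ (i, j) (emb2 hn2 c)) =
        (Tt 0 * Et) (emb1 hn1 b) (i, j) * Et⁻¹ (i, j) (emb2 hn2 c) := by
      intro i j; rw [if_pos rfl, one_mul]
    rw [Finset.sum_congr rfl (fun i _ => Finset.sum_congr rfl (fun j _ => hw i j)), hfin]
    rfl
  · have ha1 : a = 1 := by omega
    subst ha1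
    have hstep : ∀ (i : Fin (m' + 2)) (j : Fin m12),
        cpt i * (Tt 0 * Et) (emb1 hn1 b) (i, j) = (Tt 1 * Et) (emb1 hn1 b) (i, j) := by
      intro i j
      have hk0 := kerrel i j (emb1 hn1 b) (emb1_fst_ne_zero hn1 b)
      simp only [sub_mul, Finset.sum_sub_distrib] at hk0
      rw [sub_eq_zero] at hk0
      rw [Matrix.mul_apply, Matrix.mul_apply, Finset.mul_sum]
      rw [Finset.sum_congr rfl (fun y _ => (mul_assoc (cpt i) _ _).symm)]
      exact hk0
    have hw : ∀ (i : Fin (m' + 2)) (j : Fin m12),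
        (if (1 : Fin 2) = 0 then (1:ℂ) else cpt i) *
          ((Tt 0 * Et) (emb1 hn1 b) (i, j) * Et⁻¹ (i, j) (emb2 hn2 c)) =
        (Tt 1 * Et) (emb1 hn1 b) (i, j) * Et⁻¹ (i, j) (emb2 hn2 c) := by
      intro i j
      rw [if_neg (by decide), ← mul_assoc, hstep i j]
    rw [Finset.sum_congr rfl (fun i _ => Finset.sum_congr rfl (fun j _ => hw i j)), hfin]
    rfl

lemma eval_TP_emb (hn1 : n1 ≤ (m' + 1) * m12) (hn2 : n2 ≤ (m' + 2) * m12)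
    (t : ℂ) (a : Fin 2) (b : Fin n1) (c : Fin n2) :
    eval t (TP T hn1 hn2 a (emb1 hn1 b) (emb2 hn2 c)) =
      Tbig a (emb1 hn1 b) (emb2 hn2 c) +
        t * (T a b c - Tbig a (emb1 hn1 b) (emb2 hn2 c)) := by
  rw [TP_map_apply, padT_emb]

end TnsProof

/-- If the nontriviality condition fails because `m12 ≤ k1`, the triangle tensor
network variety with a physical dimension 2 fills the ambient space. -/
theorem tns_fills_of_large_k1 (m m12 k1 k2 n1 n2 : ℕ)
    (hm : 2 ≤ m) (hm12 : 1 ≤ m12)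
    (hk21 : k2 ≤ k1) (hk1lo : m12 ≤ k1) (hk1hi : k1 < m * m12)
    (hn1 : n1 + k1 = m * m12) (hn2 : n2 + k2 = m * m12) :
    TNS m m12 m 2 n1 n2 = Set.univ := by
  obtain ⟨m', rfl⟩ : ∃ m', m = m' + 2 := ⟨m - 2, by omega⟩
  have hmul : (m' + 2) * m12 = (m' + 1) * m12 + m12 := by ring
  have hle1 : n1 ≤ (m' + 1) * m12 := by omega
  have hle2 : n2 ≤ (m' + 2) * m12 := by omega
  apply Set.eq_univ_of_forall
  intro T
  set F := (TnsProof.Ehat T hle1 hle2).det with hF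
  have hF0 : eval 0 F ≠ 0 := TnsProof.eval_zero_det_Ehat T hle1 hle2
  have hFne : F ≠ 0 := fun h => hF0 (by rw [h]; simp)
  have hfin : {t : ℂ | F.IsRoot t}.Finite := F.finite_setOf_isRoot hFne
  have hdense : Dense {t : ℂ | F.IsRoot t}ᶜ := hfin.countable.dense_compl ℂ
  set g : ℂ → (Fin 2 → Fin n1 → Fin n2 → ℂ) := fun t a b c =>
    TnsProof.Tbig a (TnsProof.emb1 hle1 b) (TnsProof.emb2 hle2 c) +
      t * (T a b c - TnsProof.Tbig a (TnsProof.emb1 hle1 b) (TnsProof.emb2 hle2 c)) with hg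
  have hgmem : ∀ t ∈ {t : ℂ | F.IsRoot t}ᶜ, g t ∈ tnsSet (m' + 2) m12 (m' + 2) 2 n1 n2 := by
    intro t htmem
    have ht : eval t F ≠ 0 := fun h => htmem h
    have hmem := TnsProof.mem_tnsSet_of_cert T hle1 hle2 t ht
    have hgt : g t = (fun a b c => eval t (TnsProof.TP T hle1 hle2 a
        (TnsProof.emb1 hle1 b) (TnsProof.emb2 hle2 c))) := by
      funext a b c
      rw [TnsProof.eval_TP_emb, hg]
    rw [hgt]
    exact hmem
  have hcont : Continuous g := by
    apply continuous_pi; intro a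
    apply continuous_pi; intro b
    apply continuous_pi; intro c
    exact continuous_const.add (continuous_id.mul continuous_const)
  have h1 : (1 : ℂ) ∈ closure {t : ℂ | F.IsRoot t}ᶜ := hdense 1
  have hT : T = g 1 := by
    funext a b c
    rw [hg]
    ring
  rw [TNS, hT]
  have himg : g 1 ∈ g '' closure {t : ℂ | F.IsRoot t}ᶜ := ⟨1, h1, rfl⟩
  have h2 : g '' closure {t : ℂ | F.IsRoot t}ᶜ ⊆
      closure (g '' {t : ℂ | F.IsRoot t}ᶜ) := image_closure_subset_closure_image hcont
  have h3 : closure (g '' {t : ℂ | F.IsRoot t}ᶜ) ⊆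
      closure (tnsSet (m' + 2) m12 (m' + 2) 2 n1 n2) := by
    apply closure_mono
    rintro x ⟨t, htt, rfl⟩
    exact hgmem t htt
  exact h3 (h2 himg)
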